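/- Under the hypotheses above, the domain of the Lax operator L_u⁺ (i.e. {g ∈ H^{1/2}_+ : B_u g ∈ H_+}) is contained in H^{1-s}_+; in particular every eigenfunction of L_u = L_u⁺ − (1 + η_s(‖u‖_{-s})) lies in H^{1-s}_+. -/

import Mathlib

noncomputable section

open scoped BigOperators

/-- The weight `⟨n⟩ = max 1 |n|`. -/
def wt (n : ℤ) : ℝ := max 1 |n|

/-- A Fourier coefficient sequence belongs to the Sobolev space `H^t(𝕋, ℂ)`. -/
def MemSob (t : ℝ) (a : ℤ → ℂ) : Prop :=
  Summable fun n : ℤ => wt n ^ (2 * t) * ‖a n‖ ^ 2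

/-- The Sobolev `H^t` norm of a Fourier coefficient sequence. -/
def sobNorm (t : ℝ) (a : ℤ → ℂ) : ℝ :=
  Real.sqrt (∑' n : ℤ, wt n ^ (2 * t) * ‖a n‖ ^ 2)

/-- `f` lies in the Hardy space: vanishing negative Fourier modes. -/
def PlusSupp (b : ℤ → ℂ) : Prop := ∀ n : ℤ, n < 0 → b n = 0

/-- `u` is real valued: `conj (û(n)) = û(-n)`. -/
def RealCoeff (a : ℤ → ℂ) : Prop := ∀ n : ℤ, (starRingEnd ℂ) (a n) = a (-n)

/-- `η_s(r) = r (2(1+r))^{(1+2s)/(1-2s)} C²`. -/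
def etaS (s C r : ℝ) : ℝ := r * (2 * (1 + r)) ^ ((1 + 2 * s) / (1 - 2 * s)) * C ^ 2

/-- The Toeplitz operator `T_u f = Π(uf)` in Fourier coefficients (before
projection): `(uf)^(n) = ∑_m û(n-m) f̂(m)`. -/
def toeplitz (a b : ℤ → ℂ) (n : ℤ) : ℂ := ∑' m : ℤ, a (n - m) * b m

/-- `B_u f = Df − T_u f + (1+η) f` in Fourier coefficients, with the Szegő
projection `Π` cutting off negative modes. -/
def BuC (a : ℤ → ℂ) (η : ℝ) (b : ℤ → ℂ) (n : ℤ) : ℂ :=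
  if n < 0 then 0 else (n : ℂ) * b n - toeplitz a b n + (1 + η) * b n



open scoped ENNReal NNReal

namespace SW

lemma ofReal_norm_eq_coe_nnnorm (x : ℂ) : ENNReal.ofReal ‖x‖ = (‖x‖₊ : ℝ≥0∞) := by
  rw [ofReal_norm]; rfl

def w (n : ℤ) : ℝ≥0∞ := ENNReal.ofReal (wt n)

lemma wt_pos (n : ℤ) : 0 < wt n := lt_of_lt_of_le one_pos (le_max_left _ _)
lemma one_le_wt (n : ℤ) : 1 ≤ wt n := le_max_left _ _
lemma one_le_w (n : ℤ) : 1 ≤ w n := by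
  rw [w, ← ENNReal.ofReal_one]; exact ENNReal.ofReal_le_ofReal (one_le_wt n)
lemma w_ne_zero (n : ℤ) : w n ≠ 0 := by
  intro h; have := one_le_w n; rw [h] at this; simp at this
lemma w_ne_top (n : ℤ) : w n ≠ ⊤ := ENNReal.ofReal_ne_top

lemma wt_mono {m k : ℤ} (h : |m| ≤ |k|) : wt m ≤ wt k := by
  have : |(m:ℝ)| ≤ |(k:ℝ)| := by
    rw [← Int.cast_abs, ← Int.cast_abs]; exact_mod_cast h
  exact max_le_max le_rfl this

lemma w_mono {m k : ℤ} (h : |m| ≤ |k|) : w m ≤ w k :=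
  ENNReal.ofReal_le_ofReal (wt_mono h)

lemma wt_add_le (k m : ℤ) : wt (k + m) ≤ wt k + wt m := by
  have h1 : |((k+m : ℤ):ℝ)| ≤ |(k:ℝ)| + |(m:ℝ)| := by push_cast; exact abs_add_le _ _
  have h2 : |(k:ℝ)| ≤ wt k := le_max_right _ _
  have h3 : |(m:ℝ)| ≤ wt m := le_max_right _ _
  apply max_le
  · linarith [one_le_wt k, one_le_wt m, abs_nonneg (m:ℝ), abs_nonneg (k:ℝ), wt_pos m]
  · calc |((k+m : ℤ):ℝ)| ≤ |(k:ℝ)| + |(m:ℝ)| := h1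
      _ ≤ _ := add_le_add h2 h3

lemma w_add_le (k m : ℤ) : w (k + m) ≤ w k + w m := by
  rw [w, w, w, ← ENNReal.ofReal_add (wt_pos k).le (wt_pos m).le]
  exact ENNReal.ofReal_le_ofReal (wt_add_le k m)

lemma w_sub_le (n m : ℤ) : w (n - m) ≤ w n + w m := by
  have := w_add_le n (-m)
  have hm : w (-m) = w m := by
    unfold w wt
    congr 1
    rw [show ((-m : ℤ):ℝ) = -(m:ℝ) by push_cast; ring, abs_neg]
  rw [hm] at this; simpa [sub_eq_add_neg] using this

-- rpow monotonicity
lemma w_rpow_le_w_rpow {x y : ℤ} (h : w x ≤ w y) {t : ℝ} (ht : 0 ≤ t) :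
    w x ^ t ≤ w y ^ t := ENNReal.rpow_le_rpow h ht

lemma w_rpow_anti {x y : ℤ} (h : w x ≤ w y) {t : ℝ} (ht : t ≤ 0) :
    w y ^ t ≤ w x ^ t := by
  rcases eq_or_lt_of_le ht with rfl | ht'
  · simp
  · have hx0 := w_ne_zero x; have hyt := w_ne_top y
    rw [show t = -(-t) by ring, ENNReal.rpow_neg (w y), ENNReal.rpow_neg (w x)]
    exact ENNReal.inv_le_inv.mpr (ENNReal.rpow_le_rpow h (by linarith))

lemma w_rpow_le_one {n : ℤ} {t : ℝ} (ht : t ≤ 0) : w n ^ t ≤ 1 := by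
  have := w_rpow_anti (x := 0) (y := n) (by apply w_mono; simp) ht
  simpa [w, wt] using this

lemma w_rpow_ne_top {n : ℤ} {t : ℝ} : w n ^ t ≠ ⊤ := by
  rcases le_or_gt 0 t with ht | ht
  · exact ENNReal.rpow_ne_top_of_nonneg ht (w_ne_top n)
  · intro h
    have := w_rpow_le_one (n := n) ht.le
    rw [h] at this; simp at this

lemma w_rpow_ne_zero {n : ℤ} {t : ℝ} : w n ^ t ≠ 0 := by
  simp [ENNReal.rpow_eq_zero_iff, w_ne_zero n, w_ne_top n]

lemma w_rpow_add (n : ℤ) (t u : ℝ) : w n ^ (t + u) = w n ^ t * w n ^ u :=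
  ENNReal.rpow_add t u (w_ne_zero n) (w_ne_top n)

lemma cs (f g : ℤ → ℝ≥0∞) :
    (∑' i, f i * g i) ^ 2 ≤ (∑' i, (f i) ^ 2) * (∑' i, (g i) ^ 2) := by
  have hpq : Real.HolderConjugate 2 2 := Real.HolderConjugate.two_two
  have h := ENNReal.lintegral_mul_le_Lp_mul_Lq (MeasureTheory.Measure.count (α := ℤ)) hpq
    (measurable_of_countable f).aemeasurable (measurable_of_countable g).aemeasurable
  rw [MeasureTheory.lintegral_count] at h
  simp only [Pi.mul_apply] at h
  rw [MeasureTheory.lintegral_count, MeasureTheory.lintegral_count] at h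
  have h2 : ∀ x : ℝ≥0∞, x ^ (2:ℝ) = x ^ 2 := fun x => by
    rw [← ENNReal.rpow_natCast x 2]; norm_num
  simp only [h2] at h
  have hsq : ∀ X : ℝ≥0∞, (X ^ (1/(2:ℝ))) ^ (2:ℕ) = X := fun X => by
    rw [← ENNReal.rpow_natCast (X ^ (1/(2:ℝ))) 2, ← ENNReal.rpow_mul]; norm_num
  calc (∑' i, f i * g i) ^ 2 ≤
      ((∑' i, (f i)^2) ^ (1/(2:ℝ)) * (∑' i, (g i)^2) ^ (1/(2:ℝ))) ^ 2 :=
        pow_le_pow_left' h 2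
    _ = (∑' i, (f i) ^ 2) * (∑' i, (g i) ^ 2) := by rw [mul_pow, hsq, hsq]

lemma tsum_shift (c : ℤ → ℝ≥0∞) (n : ℤ) : ∑' m, c (n - m) = ∑' k, c k :=
  Equiv.tsum_eq (Equiv.subLeft n) c

lemma tsum_shift' (c : ℤ → ℝ≥0∞) (m : ℤ) : ∑' n, c (n - m) = ∑' k, c k :=
  Equiv.tsum_eq (Equiv.subRight m) c

lemma young (c d : ℤ → ℝ≥0∞) :
    ∑' n, (∑' m, c (n - m) * d m) ^ 2 ≤ (∑' k, c k) ^ 2 * ∑' m, (d m) ^ 2 := by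
  have key : ∀ n, (∑' m, c (n - m) * d m) ^ 2 ≤
      (∑' k, c k) * ∑' m, c (n - m) * (d m) ^ 2 := by
    intro n
    have := cs (fun m => (c (n - m)) ^ (2:ℝ)⁻¹) (fun m => (c (n - m)) ^ (2:ℝ)⁻¹ * d m)
    have e1 : ∀ m, (c (n-m)) ^ (2:ℝ)⁻¹ * ((c (n-m)) ^ (2:ℝ)⁻¹ * d m) = c (n-m) * d m := by
      intro m
      rw [← mul_assoc, ← ENNReal.rpow_add_of_nonneg _ _ (by norm_num) (by norm_num)]
      norm_num
    have e2 : ∀ m, ((c (n-m)) ^ (2:ℝ)⁻¹) ^ 2 = c (n - m) := fun m => by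
      rw [← ENNReal.rpow_natCast (_ ^ (2:ℝ)⁻¹) 2, ← ENNReal.rpow_mul]; norm_num
    have e3 : ∀ m, ((c (n-m)) ^ (2:ℝ)⁻¹ * d m) ^ 2 = c (n-m) * (d m) ^ 2 := fun m => by
      rw [mul_pow, e2]
    simp only [e1, e2, e3] at this
    rwa [tsum_shift c n] at this
  calc ∑' n, (∑' m, c (n - m) * d m) ^ 2
      ≤ ∑' n, (∑' k, c k) * ∑' m, c (n - m) * (d m) ^ 2 := ENNReal.tsum_le_tsum key
    _ = (∑' k, c k) * ∑' n, ∑' m, c (n - m) * (d m) ^ 2 := ENNReal.tsum_mul_left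
    _ = (∑' k, c k) * ∑' m, ∑' n, c (n - m) * (d m) ^ 2 := by rw [ENNReal.tsum_comm]
    _ = (∑' k, c k) * ∑' m, (d m) ^ 2 * ∑' k, c k := by
        congr 1; exact tsum_congr fun m => by
          rw [ENNReal.tsum_mul_right, tsum_shift', mul_comm]
    _ = (∑' k, c k) * ((∑' m, (d m) ^ 2) * ∑' k, c k) := by rw [ENNReal.tsum_mul_right]
    _ = (∑' k, c k) ^ 2 * ∑' m, (d m) ^ 2 := by ring

lemma sum_wt_rpow {t : ℝ} (ht : t < -1) : Summable (fun n : ℤ => wt n ^ t) := by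
  have hb : 1 < -t := by linarith
  have h1 : Summable fun n : ℤ => |(n:ℝ)| ^ (-(-t)) := Real.summable_abs_int_rpow hb
  have h2 : Summable fun n : ℤ => (if n = 0 then (1:ℝ) else 0) :=
    (hasSum_ite_eq (0:ℤ) (1:ℝ)).summable
  refine Summable.of_nonneg_of_le (g := fun n : ℤ => wt n ^ t)
    (f := fun n : ℤ => |(n:ℝ)| ^ (-(-t)) + (if n = 0 then (1:ℝ) else 0))
    (fun n => Real.rpow_nonneg (wt_pos n).le t) ?_ (h1.add h2)
  intro n
  show wt n ^ t ≤ |(n:ℝ)| ^ (-(-t)) + if n = 0 then (1:ℝ) else 0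
  by_cases hn : n = 0
  · subst hn
    have h0 : wt 0 = 1 := by simp [wt]
    rw [h0, Real.one_rpow, if_pos rfl]
    have : (0:ℝ) ≤ |((0:ℤ):ℝ)| ^ (-(-t)) := Real.rpow_nonneg (abs_nonneg _) _
    linarith
  · have h1n : (1:ℝ) ≤ |(n:ℝ)| := by
      rw [← Int.cast_abs]
      exact_mod_cast Int.one_le_abs (by simpa using hn)
    have hw : wt n = |(n:ℝ)| := max_eq_right h1n
    rw [hw, if_neg hn, add_zero, neg_neg]

lemma sum_w_rpow {t : ℝ} (ht : t < -1) : ∑' n : ℤ, w n ^ t ≠ ⊤ := by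
  have he : ∀ n : ℤ, w n ^ t = ENNReal.ofReal (wt n ^ t) := fun n =>
    ENNReal.ofReal_rpow_of_pos (wt_pos n)
  rw [tsum_congr he, ← ENNReal.ofReal_tsum_of_nonneg
    (fun n => Real.rpow_nonneg (wt_pos n).le t) (sum_wt_rpow ht)]
  exact ENNReal.ofReal_ne_top

lemma mul_le_add_sq (x y : ℝ≥0∞) : x * y ≤ x ^ 2 + y ^ 2 := by
  rcases le_total x y with h | h
  · calc x*y ≤ y*y := mul_le_mul_left h y
      _ = y^2 := (sq y).symm
      _ ≤ _ := le_add_self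
  · calc x*y ≤ x*x := mul_le_mul_right h x
      _ = x^2 := (sq x).symm
      _ ≤ _ := self_le_add_right _ _

lemma add_sq_le (x y : ℝ≥0∞) : (x + y) ^ 2 ≤ 3 * (x ^ 2 + y ^ 2) := by
  have e : (x + y) ^ 2 = (x^2 + y^2) + (x*y + x*y) := by ring
  rw [e]
  have h := mul_le_add_sq x y
  calc (x^2 + y^2) + (x*y + x*y) ≤ (x^2+y^2) + ((x^2+y^2) + (x^2+y^2)) :=
        add_le_add le_rfl (add_le_add h h)
    _ = 3 * (x^2 + y^2) := by ring

lemma add3_sq_le (x y z : ℝ≥0∞) : (x + y + z) ^ 2 ≤ 9 * (x ^ 2 + y ^ 2 + z ^ 2) := by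
  calc (x + y + z)^2 = (x + (y + z))^2 := by ring
    _ ≤ 3 * (x^2 + (y+z)^2) := add_sq_le x (y+z)
    _ ≤ 3 * (x^2 + 3*(y^2+z^2)) :=
        mul_le_mul_right (add_le_add le_rfl (add_sq_le y z)) 3
    _ = 3*x^2 + 9*y^2 + 9*z^2 := by ring
    _ ≤ 9*x^2 + 9*y^2 + 9*z^2 := by
        exact add_le_add (add_le_add (mul_le_mul_left (by norm_num) _) le_rfl) le_rfl
    _ = 9 * (x^2 + y^2 + z^2) := by ring

lemma w_rpow_mul_rpow (n : ℤ) (t u : ℝ) : w n ^ t * w n ^ u = w n ^ (t + u) :=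
  (w_rpow_add n t u).symm

lemma w_rpow_sq (n : ℤ) (t : ℝ) : (w n ^ t) ^ 2 = w n ^ (2 * t) := by
  rw [← ENNReal.rpow_natCast (w n ^ t) 2, ← ENNReal.rpow_mul]
  norm_num [mul_comm]

lemma conv_comm (c d : ℤ → ℝ≥0∞) (n : ℤ) : ∑' m, c m * d (n - m) = ∑' m, c (n - m) * d m := by
  have h := Equiv.tsum_eq (Equiv.subLeft n) (fun m => c m * d (n - m))
  simp only [Equiv.subLeft_apply, sub_sub_cancel] at h
  exact h.symm

lemma sq_tsum_ne_top {X : ℝ≥0∞} (h : X ^ 2 ≠ ⊤) : X ≠ ⊤ := by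
  intro hx; rw [hx] at h; simp at h

lemma tsum_cs_ne_top {f g : ℤ → ℝ≥0∞} (hf : ∑' i, (f i)^2 ≠ ⊤) (hg : ∑' i, (g i)^2 ≠ ⊤) :
    ∑' i, f i * g i ≠ ⊤ := by
  apply sq_tsum_ne_top
  exact ne_top_of_le_ne_top (ENNReal.mul_ne_top hf hg) (cs f g)

lemma conv_sq_ne_top (s σ c : ℝ) (hs0 : 0 ≤ s) (hsc : s ≤ c) (hsσ : s ≤ σ)
    (hE : 2 * (s - σ - c) < -1)
    (A G : ℤ → ℝ≥0∞)
    (hA : ∑' k, w k ^ (-(2*s)) * (A k) ^ 2 ≠ ⊤)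
    (hG : ∑' m, w m ^ (2*σ) * (G m) ^ 2 ≠ ⊤) :
    ∑' n : ℤ, w n ^ (-(2*c)) * (∑' m : ℤ, A (n - m) * G m) ^ 2 ≠ ⊤ := by
  have hc0 : 0 ≤ c := le_trans hs0 hsc
  have hσ0 : 0 ≤ σ := le_trans hs0 hsσ
  set E : ℝ := s - σ - c with hEdef
  -- renormalized sequences
  set α : ℤ → ℝ≥0∞ := fun k => w k ^ (-s) * A k with hα
  set γ : ℤ → ℝ≥0∞ := fun m => w m ^ σ * G m with hγ
  have hAid : ∀ k, A k = w k ^ s * α k := by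
    intro k
    simp only [hα]
    rw [← mul_assoc, w_rpow_mul_rpow]
    have h0 : s + -s = (0:ℝ) := by ring
    rw [h0, ENNReal.rpow_zero, one_mul]
  have hGid : ∀ m, G m = w m ^ (-σ) * γ m := by
    intro m
    simp only [hγ]
    rw [← mul_assoc, w_rpow_mul_rpow]
    have h0 : -σ + σ = (0:ℝ) := by ring
    rw [h0, ENNReal.rpow_zero, one_mul]
  have hα2 : ∑' k, (α k) ^ 2 ≠ ⊤ := by
    have : ∀ k, (α k)^2 = w k ^ (-(2*s)) * (A k)^2 := fun k => by
      simp only [hα]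
      rw [mul_pow, w_rpow_sq]
      have h2 : 2 * -s = -(2*s) := by ring
      rw [h2]
    rwa [tsum_congr this]
  have hγ2 : ∑' m, (γ m) ^ 2 ≠ ⊤ := by
    have : ∀ m, (γ m)^2 = w m ^ (2*σ) * (G m)^2 := fun m => by
      simp only [hγ]
      rw [mul_pow, w_rpow_sq]
    rwa [tsum_congr this]
  -- region pieces
  set term : ℤ → ℤ → ℝ≥0∞ := fun n m => A (n - m) * G m with hterm
  set tK : ℤ → ℤ → ℝ≥0∞ := fun n m =>
    if w (n-m) ≤ w m ∧ w (n-m) ≤ w n then term n m else 0 with htK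
  set tM : ℤ → ℤ → ℝ≥0∞ := fun n m =>
    if w m ≤ w (n-m) ∧ w m ≤ w n then term n m else 0 with htM
  set tN : ℤ → ℤ → ℝ≥0∞ := fun n m =>
    if w n ≤ w (n-m) ∧ w n ≤ w m then term n m else 0 with htN
  have hcov : ∀ n m, term n m ≤ tK n m + tM n m + tN n m := by
    intro n m
    rcases le_total (w (n-m)) (w m) with h1 | h1
    · rcases le_total (w (n-m)) (w n) with h2 | h2
      · calc term n m = tK n m := by simp only [htK]; rw [if_pos ⟨h1, h2⟩]
          _ ≤ _ := le_add_right (le_add_right le_rfl)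
      · calc term n m = tN n m := by simp only [htN]; rw [if_pos ⟨h2, le_trans h2 h1⟩]
          _ ≤ _ := le_add_self
    · rcases le_total (w m) (w n) with h2 | h2
      · calc term n m = tM n m := by simp only [htM]; rw [if_pos ⟨h1, h2⟩]
          _ ≤ _ := le_add_right le_add_self
      · calc term n m = tN n m := by simp only [htN]; rw [if_pos ⟨le_trans h2 h1, h2⟩]
          _ ≤ _ := le_add_self
  -- convolution kernels
  set cK : ℤ → ℝ≥0∞ := fun k => w k ^ E * α k with hcK
  set cM : ℤ → ℝ≥0∞ := fun m => w m ^ E * γ m with hcM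
  have hsumE : ∑' k, w k ^ (2*E) ≠ ⊤ := sum_w_rpow (by linarith)
  have hcKsum : ∑' k, cK k ≠ ⊤ := by
    apply tsum_cs_ne_top (f := fun k => w k ^ E) (g := α) _ hα2
    rw [tsum_congr (fun k => w_rpow_sq k E)]
    exact hsumE
  have hcMsum : ∑' m, cM m ≠ ⊤ := by
    apply tsum_cs_ne_top (f := fun m => w m ^ E) (g := γ) _ hγ2
    rw [tsum_congr (fun k => w_rpow_sq k E)]
    exact hsumE
  -- region K bound
  have hKb : ∀ n m, w n ^ (-c) * tK n m ≤ cK (n-m) * γ m := by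
    intro n m
    simp only [htK]
    split_ifs with h
    · obtain ⟨h1, h2⟩ := h
      simp only [hterm, hcK]
      rw [hAid (n-m), hGid m]
      calc w n ^ (-c) * (w (n-m) ^ s * α (n-m) * (w m ^ (-σ) * γ m))
          = (w n ^ (-c) * w m ^ (-σ)) * (w (n-m) ^ s * (α (n-m) * γ m)) := by ring
        _ ≤ (w (n-m) ^ (-c) * w (n-m) ^ (-σ)) * (w (n-m) ^ s * (α (n-m) * γ m)) := by
            apply mul_le_mul_left
            exact mul_le_mul' (w_rpow_anti h2 (by linarith)) (w_rpow_anti h1 (by linarith))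
        _ = (w (n-m) ^ (-c) * w (n-m) ^ (-σ) * w (n-m) ^ s) * (α (n-m) * γ m) := by ring
        _ = w (n-m) ^ E * α (n-m) * γ m := by
            rw [w_rpow_mul_rpow, w_rpow_mul_rpow]
            have he : -c + -σ + s = E := by rw [hEdef]; ring
            rw [he]; ring
    · simp
  -- region M bound
  have hMb : ∀ n m, w n ^ (-c) * tM n m ≤ (2:ℝ≥0∞) ^ s * (cM m * α (n-m)) := by
    intro n m
    simp only [htM]
    split_ifs with h
    · obtain ⟨h1, h2⟩ := h
      have hk2 : w (n-m) ≤ 2 * w n := by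
        calc w (n-m) ≤ w n + w m := w_sub_le n m
          _ ≤ w n + w n := add_le_add le_rfl h2
          _ = 2 * w n := (two_mul _).symm
      have hks : w (n-m) ^ s ≤ (2:ℝ≥0∞) ^ s * w n ^ s := by
        calc w (n-m) ^ s ≤ (2 * w n) ^ s := ENNReal.rpow_le_rpow hk2 hs0
          _ = (2:ℝ≥0∞) ^ s * w n ^ s := ENNReal.mul_rpow_of_nonneg _ _ hs0
      simp only [hterm, hcM]
      rw [hAid (n-m), hGid m]
      calc w n ^ (-c) * (w (n-m) ^ s * α (n-m) * (w m ^ (-σ) * γ m))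
          = w (n-m) ^ s * (w n ^ (-c) * w m ^ (-σ) * (α (n-m) * γ m)) := by ring
        _ ≤ ((2:ℝ≥0∞) ^ s * w n ^ s) * (w n ^ (-c) * w m ^ (-σ) * (α (n-m) * γ m)) :=
            mul_le_mul_left hks _
        _ = (2:ℝ≥0∞) ^ s * ((w n ^ s * w n ^ (-c)) * w m ^ (-σ) * (α (n-m) * γ m)) := by ring
        _ ≤ (2:ℝ≥0∞) ^ s * ((w m ^ s * w m ^ (-c)) * w m ^ (-σ) * (α (n-m) * γ m)) := by
            apply mul_le_mul_right
            apply mul_le_mul_left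
            apply mul_le_mul_left
            rw [w_rpow_mul_rpow, w_rpow_mul_rpow]
            exact w_rpow_anti h2 (by linarith)
        _ = (2:ℝ≥0∞) ^ s * ((w m ^ s * w m ^ (-c) * w m ^ (-σ)) * (α (n-m) * γ m)) := by
            ring
        _ = (2:ℝ≥0∞) ^ s * (w m ^ E * γ m * α (n-m)) := by
            rw [w_rpow_mul_rpow, w_rpow_mul_rpow]
            have he : s + -c + -σ = E := by rw [hEdef]; ring
            rw [he]; ring
    · simp
  -- region N bound
  have hNb : ∀ n m, w n ^ (-c) * tN n m ≤ (2:ℝ≥0∞) ^ s * (w n ^ E * (α (n-m) * γ m)) := by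
    intro n m
    simp only [htN]
    split_ifs with h
    · obtain ⟨h1, h2⟩ := h
      have hk2 : w (n-m) ≤ 2 * w m := by
        calc w (n-m) ≤ w n + w m := w_sub_le n m
          _ ≤ w m + w m := add_le_add h2 le_rfl
          _ = 2 * w m := (two_mul _).symm
      have hks : w (n-m) ^ s ≤ (2:ℝ≥0∞) ^ s * w m ^ s := by
        calc w (n-m) ^ s ≤ (2 * w m) ^ s := ENNReal.rpow_le_rpow hk2 hs0
          _ = _ := ENNReal.mul_rpow_of_nonneg _ _ hs0
      simp only [hterm]
      rw [hAid (n-m), hGid m]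
      calc w n ^ (-c) * (w (n-m) ^ s * α (n-m) * (w m ^ (-σ) * γ m))
          = w (n-m) ^ s * (w n ^ (-c) * w m ^ (-σ) * (α (n-m) * γ m)) := by ring
        _ ≤ ((2:ℝ≥0∞) ^ s * w m ^ s) * (w n ^ (-c) * w m ^ (-σ) * (α (n-m) * γ m)) :=
            mul_le_mul_left hks _
        _ = (2:ℝ≥0∞) ^ s * ((w m ^ s * w m ^ (-σ)) * w n ^ (-c) * (α (n-m) * γ m)) := by ring
        _ ≤ (2:ℝ≥0∞) ^ s * ((w n ^ s * w n ^ (-σ)) * w n ^ (-c) * (α (n-m) * γ m)) := by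
            apply mul_le_mul_right
            apply mul_le_mul_left
            apply mul_le_mul_left
            rw [w_rpow_mul_rpow, w_rpow_mul_rpow]
            exact w_rpow_anti h2 (by linarith)
        _ = (2:ℝ≥0∞) ^ s * ((w n ^ s * w n ^ (-σ) * w n ^ (-c)) * (α (n-m) * γ m)) := by
            ring
        _ = (2:ℝ≥0∞) ^ s * (w n ^ E * (α (n-m) * γ m)) := by
            rw [w_rpow_mul_rpow, w_rpow_mul_rpow]
            have he : s + -σ + -c = E := by rw [hEdef]; ring
            rw [he]
    · simp
  -- assemble pointwise
  have hmain : ∀ n : ℤ, w n ^ (-(2*c)) * (∑' m, A (n - m) * G m) ^ 2 ≤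
      9 * ((∑' m, cK (n-m) * γ m)^2
        + ((2:ℝ≥0∞)^s * ∑' m, cM (n-m) * α m)^2
        + ((2:ℝ≥0∞)^s * w n ^ E * ∑' m, α (n-m) * γ m)^2) := by
    intro n
    have hsplit : (∑' m, term n m) ≤ (∑' m, tK n m) + (∑' m, tM n m) + (∑' m, tN n m) := by
      calc (∑' m, term n m) ≤ ∑' m, (tK n m + tM n m + tN n m) := ENNReal.tsum_le_tsum (hcov n)
        _ = _ := by rw [ENNReal.tsum_add, ENNReal.tsum_add]
    have hwK : w n ^ (-c) * ∑' m, tK n m ≤ ∑' m, cK (n-m) * γ m := by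
      rw [← ENNReal.tsum_mul_left]
      exact ENNReal.tsum_le_tsum (hKb n)
    have hwM : w n ^ (-c) * ∑' m, tM n m ≤ (2:ℝ≥0∞)^s * ∑' m, cM (n-m) * α m := by
      rw [← ENNReal.tsum_mul_left]
      calc ∑' m, w n ^ (-c) * tM n m ≤ ∑' m, (2:ℝ≥0∞)^s * (cM m * α (n-m)) :=
            ENNReal.tsum_le_tsum (hMb n)
        _ = (2:ℝ≥0∞)^s * ∑' m, cM m * α (n-m) := ENNReal.tsum_mul_left
        _ = (2:ℝ≥0∞)^s * ∑' m, cM (n-m) * α m := by rw [conv_comm]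
    have hwN : w n ^ (-c) * ∑' m, tN n m ≤ (2:ℝ≥0∞)^s * w n ^ E * ∑' m, α (n-m) * γ m := by
      rw [← ENNReal.tsum_mul_left]
      calc ∑' m, w n ^ (-c) * tN n m
          ≤ ∑' m, (2:ℝ≥0∞)^s * (w n ^ E * (α (n-m) * γ m)) := ENNReal.tsum_le_tsum (hNb n)
        _ = (2:ℝ≥0∞)^s * (w n ^ E * ∑' m, α (n-m) * γ m) := by
            rw [ENNReal.tsum_mul_left, ENNReal.tsum_mul_left]
        _ = _ := by rw [mul_assoc]
    have hw2 : w n ^ (-(2*c)) * (∑' m, term n m) ^ 2 = (w n ^ (-c) * ∑' m, term n m)^2 := by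
      rw [mul_pow, w_rpow_sq]
      ring_nf
    calc w n ^ (-(2*c)) * (∑' m, A (n - m) * G m) ^ 2
        = (w n ^ (-c) * ∑' m, term n m)^2 := hw2
      _ ≤ (w n ^ (-c) * ((∑' m, tK n m) + (∑' m, tM n m) + (∑' m, tN n m)))^2 := by
          apply pow_le_pow_left' (mul_le_mul_right hsplit _)
      _ = (w n ^ (-c) * (∑' m, tK n m) + w n ^ (-c) * (∑' m, tM n m)
            + w n ^ (-c) * (∑' m, tN n m))^2 := by ring
      _ ≤ ((∑' m, cK (n-m) * γ m) + ((2:ℝ≥0∞)^s * ∑' m, cM (n-m) * α m)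
            + ((2:ℝ≥0∞)^s * w n ^ E * ∑' m, α (n-m) * γ m))^2 :=
          pow_le_pow_left' (add_le_add (add_le_add hwK hwM) hwN) 2
      _ ≤ _ := add3_sq_le _ _ _
  -- sum the three pieces
  have hKsum : ∑' n, (∑' m, cK (n-m) * γ m)^2 ≠ ⊤ :=
    ne_top_of_le_ne_top (ENNReal.mul_ne_top (by
      exact ENNReal.pow_ne_top hcKsum) hγ2) (young cK γ)
  have hMsum : ∑' n, ((2:ℝ≥0∞)^s * ∑' m, cM (n-m) * α m)^2 ≠ ⊤ := by
    have : ∀ n, ((2:ℝ≥0∞)^s * ∑' m, cM (n-m) * α m)^2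
        = ((2:ℝ≥0∞)^s)^2 * (∑' m, cM (n-m) * α m)^2 := fun n => mul_pow _ _ 2
    rw [tsum_congr this, ENNReal.tsum_mul_left]
    apply ENNReal.mul_ne_top
    · exact ENNReal.pow_ne_top (ENNReal.rpow_ne_top_of_nonneg hs0 (by norm_num))
    · exact ne_top_of_le_ne_top (ENNReal.mul_ne_top (ENNReal.pow_ne_top hcMsum) hα2)
        (young cM α)
  have hD : ∀ n : ℤ, ∑' m, α (n-m) * γ m ≤ (∑' k, (α k)^2) + (∑' m, (γ m)^2) := by
    intro n
    calc ∑' m, α (n-m) * γ m ≤ ∑' m, ((α (n-m))^2 + (γ m)^2) :=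
          ENNReal.tsum_le_tsum fun m => mul_le_add_sq _ _
      _ = (∑' m, (α (n-m))^2) + ∑' m, (γ m)^2 := ENNReal.tsum_add
      _ = _ := by rw [tsum_shift (fun k => (α k)^2) n]
  set D := (∑' k, (α k)^2) + (∑' m, (γ m)^2) with hDdef
  have hDne : D ≠ ⊤ := by
    rw [hDdef]; exact ENNReal.add_ne_top.mpr ⟨hα2, hγ2⟩
  have hNsum : ∑' n, ((2:ℝ≥0∞)^s * w n ^ E * ∑' m, α (n-m) * γ m)^2 ≠ ⊤ := by
    have hb : ∀ n, ((2:ℝ≥0∞)^s * w n ^ E * ∑' m, α (n-m) * γ m)^2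
        ≤ ((2:ℝ≥0∞)^s * D)^2 * w n ^ (2*E) := by
      intro n
      calc ((2:ℝ≥0∞)^s * w n ^ E * ∑' m, α (n-m) * γ m)^2
          ≤ ((2:ℝ≥0∞)^s * w n ^ E * D)^2 :=
            pow_le_pow_left' (mul_le_mul_right (hD n) _) 2
        _ = ((2:ℝ≥0∞)^s * D)^2 * (w n ^ E)^2 := by ring
        _ = _ := by rw [w_rpow_sq]
    apply ne_top_of_le_ne_top _ (ENNReal.tsum_le_tsum hb)
    rw [ENNReal.tsum_mul_left]
    exact ENNReal.mul_ne_top (ENNReal.pow_ne_top (ENNReal.mul_ne_top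
      (ENNReal.rpow_ne_top_of_nonneg hs0 (by norm_num)) hDne)) hsumE
  apply ne_top_of_le_ne_top _ (ENNReal.tsum_le_tsum hmain)
  have hsplit3 : ∑' n : ℤ, 9 * ((∑' m, cK (n-m) * γ m)^2
        + ((2:ℝ≥0∞)^s * ∑' m, cM (n-m) * α m)^2
        + ((2:ℝ≥0∞)^s * w n ^ E * ∑' m, α (n-m) * γ m)^2)
      = 9 * ((∑' n : ℤ, (∑' m, cK (n-m) * γ m)^2)
        + (∑' n : ℤ, ((2:ℝ≥0∞)^s * ∑' m, cM (n-m) * α m)^2)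
        + (∑' n : ℤ, ((2:ℝ≥0∞)^s * w n ^ E * ∑' m, α (n-m) * γ m)^2)) := by
    rw [ENNReal.tsum_mul_left]
    congr 1
    rw [ENNReal.tsum_add, ENNReal.tsum_add]
  rw [hsplit3]
  refine ENNReal.mul_ne_top (by norm_num) ?_
  exact ENNReal.add_ne_top.mpr ⟨ENNReal.add_ne_top.mpr ⟨hKsum, hMsum⟩, hNsum⟩

lemma memSob_iff (t : ℝ) (b : ℤ → ℂ) :
    MemSob t b ↔ ∑' n : ℤ, w n ^ (2*t) * ((‖b n‖₊ : ℝ≥0∞))^2 ≠ ⊤ := by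
  have hofr : ∀ n : ℤ, ENNReal.ofReal (wt n ^ (2*t) * ‖b n‖ ^ 2)
      = w n ^ (2*t) * ((‖b n‖₊ : ℝ≥0∞))^2 := by
    intro n
    rw [ENNReal.ofReal_mul (Real.rpow_nonneg (wt_pos n).le _),
      ← ENNReal.ofReal_rpow_of_pos (wt_pos n),
      ENNReal.ofReal_pow (norm_nonneg _), ofReal_norm_eq_coe_nnnorm]
    rfl
  constructor
  · intro hsum
    rw [← tsum_congr hofr, ← ENNReal.ofReal_tsum_of_nonneg
      (fun n => mul_nonneg (Real.rpow_nonneg (wt_pos n).le _) (by positivity)) hsum]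
    exact ENNReal.ofReal_ne_top
  · intro htop
    have := ENNReal.summable_toReal (tsum_congr hofr ▸ htop :
      ∑' n : ℤ, ENNReal.ofReal (wt n ^ (2*t) * ‖b n‖ ^ 2) ≠ ⊤)
    refine this.congr fun n => ?_
    exact ENNReal.toReal_ofReal (mul_nonneg (Real.rpow_nonneg (wt_pos n).le _) (by positivity))

lemma enorm_toeplitz (a g : ℤ → ℂ) (n : ℤ) :
    (‖toeplitz a g n‖₊ : ℝ≥0∞) ≤ ∑' m : ℤ, (‖a (n-m)‖₊ : ℝ≥0∞) * (‖g m‖₊ : ℝ≥0∞) := by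
  have hco : ∀ m : ℤ, (‖a (n-m)‖₊ : ℝ≥0∞) * (‖g m‖₊ : ℝ≥0∞)
      = ((‖a (n-m) * g m‖₊ : ℝ≥0) : ℝ≥0∞) := fun m => by
    rw [nnnorm_mul, ENNReal.coe_mul]
  rw [tsum_congr hco]
  by_cases h : Summable fun m : ℤ => ‖a (n-m) * g m‖₊
  · have hn : Summable fun m : ℤ => ‖a (n-m) * g m‖ := by
      rw [← NNReal.summable_coe] at h
      exact h
    calc (‖toeplitz a g n‖₊ : ℝ≥0∞) = ENNReal.ofReal ‖∑' m : ℤ, a (n-m) * g m‖ := by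
          rw [ofReal_norm_eq_coe_nnnorm]; rfl
      _ ≤ ENNReal.ofReal (∑' m : ℤ, ‖a (n-m) * g m‖) :=
          ENNReal.ofReal_le_ofReal (norm_tsum_le_tsum_norm hn)
      _ = ∑' m : ℤ, ((‖a (n-m) * g m‖₊ : ℝ≥0) : ℝ≥0∞) := by
          rw [ENNReal.ofReal_tsum_of_nonneg (fun m => norm_nonneg _) hn]
          exact tsum_congr fun m => ofReal_norm_eq_coe_nnnorm _
  · have : ∑' m : ℤ, ((‖a (n-m) * g m‖₊ : ℝ≥0) : ℝ≥0∞) = ⊤ := by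
      by_contra hne
      exact h (ENNReal.tsum_coe_ne_top_iff_summable.mp hne)
    rw [this]
    exact le_top

lemma boot {s σ c : ℝ} (hs0 : 0 ≤ s) (hsc : s ≤ c) (hsσ : s ≤ σ)
    (hE : 2 * (s - σ - c) < -1)
    (a g : ℤ → ℂ) (η : ℝ) (hplus : PlusSupp g)
    (hA : ∑' k : ℤ, w k ^ (-(2*s)) * ((‖a k‖₊ : ℝ≥0∞))^2 ≠ ⊤)
    (hG : ∑' m : ℤ, w m ^ (2*σ) * ((‖g m‖₊ : ℝ≥0∞))^2 ≠ ⊤)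
    (hH : ∑' n : ℤ, ((‖BuC a η g n‖₊ : ℝ≥0∞))^2 ≠ ⊤) :
    ∑' n : ℤ, w n ^ (2*(1-c)) * ((‖g n‖₊ : ℝ≥0∞))^2 ≠ ⊤ := by
  have hσ0 : 0 ≤ σ := le_trans hs0 hsσ
  have hc0 : 0 ≤ c := le_trans hs0 hsc
  set A : ℤ → ℝ≥0∞ := fun k => (‖a k‖₊ : ℝ≥0∞) with hAdef
  set G : ℤ → ℝ≥0∞ := fun m => (‖g m‖₊ : ℝ≥0∞) with hGdef
  set H : ℤ → ℝ≥0∞ := fun n => (‖BuC a η g n‖₊ : ℝ≥0∞) with hHdef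
  set Φ : ℤ → ℝ≥0∞ := fun n => ∑' m : ℤ, A (n - m) * G m with hΦdef
  have hΦ : ∑' n : ℤ, w n ^ (-(2*c)) * (Φ n) ^ 2 ≠ ⊤ :=
    conv_sq_ne_top s σ c hs0 hsc hsσ hE A G hA hG
  have hG2 : ∑' m : ℤ, (G m) ^ 2 ≠ ⊤ := by
    apply ne_top_of_le_ne_top hG
    apply ENNReal.tsum_le_tsum
    intro m
    conv_lhs => rw [← one_mul ((G m)^2)]
    apply mul_le_mul_left
    calc (1:ℝ≥0∞) = w m ^ (0:ℝ) := by rw [ENNReal.rpow_zero]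
      _ ≤ w m ^ (2*σ) := ENNReal.rpow_le_rpow_of_exponent_le (one_le_w m) (by linarith)
  set κ : ℝ≥0∞ := ENNReal.ofReal (|1 + η|) + 1 with hκdef
  have hκne : κ ≠ ⊤ := by
    rw [hκdef]; exact ENNReal.add_ne_top.mpr ⟨ENNReal.ofReal_ne_top, ENNReal.one_ne_top⟩
  -- pointwise equation bound
  have hpt : ∀ n : ℤ, w n * G n ≤ H n + Φ n + κ * G n := by
    intro n
    by_cases hn : n < 0
    · have : G n = 0 := by
        simp only [hGdef]
        rw [hplus n hn]
        simp
      rw [this, mul_zero]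
      exact zero_le
    · push_neg at hn
      have heq : (n:ℂ) * g n = BuC a η g n + toeplitz a g n - (1 + (η:ℂ)) * g n := by
        rw [BuC, if_neg (not_lt.mpr hn)]
        push_cast
        ring
      have hnorm : (‖(n:ℂ) * g n‖₊ : ℝ≥0∞) ≤ H n + Φ n + ENNReal.ofReal (|1 + η|) * G n := by
        rw [heq]
        calc (‖BuC a η g n + toeplitz a g n - (1 + (η:ℂ)) * g n‖₊ : ℝ≥0∞)
            ≤ (‖BuC a η g n + toeplitz a g n‖₊ : ℝ≥0∞) + (‖(1 + (η:ℂ)) * g n‖₊ : ℝ≥0∞) := by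
              rw [← ENNReal.coe_add]
              exact_mod_cast nnnorm_sub_le _ _
          _ ≤ ((‖BuC a η g n‖₊ : ℝ≥0∞) + (‖toeplitz a g n‖₊ : ℝ≥0∞))
              + (‖(1 + (η:ℂ)) * g n‖₊ : ℝ≥0∞) := by
              apply add_le_add_left
              rw [← ENNReal.coe_add]
              exact_mod_cast nnnorm_add_le _ _
          _ ≤ (H n + Φ n) + ENNReal.ofReal (|1 + η|) * G n := by
              apply add_le_add
              · exact add_le_add_right (enorm_toeplitz a g n) _
              · rw [nnnorm_mul, ENNReal.coe_mul]
                apply mul_le_mul_left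
                have hnr : ‖1 + (η:ℂ)‖ = |1 + η| := by
                  rw [show (1:ℂ) + (η:ℂ) = ((1 + η : ℝ) : ℂ) by push_cast; ring]
                  rw [Complex.norm_real, Real.norm_eq_abs]
                rw [← ofReal_norm_eq_coe_nnnorm, hnr]
          _ = H n + Φ n + ENNReal.ofReal (|1 + η|) * G n := by rw [add_assoc]
      have hwn : w n ≤ (‖(n:ℂ)‖₊ : ℝ≥0∞) + 1 := by
        have h1 : ‖(n:ℂ)‖ = |(n:ℝ)| := by
          rw [show ((n:ℤ):ℂ) = ((n:ℝ):ℂ) by push_cast; ring]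
          rw [Complex.norm_real, Real.norm_eq_abs]
        rw [← ofReal_norm_eq_coe_nnnorm, h1, w, ← ENNReal.ofReal_one,
          ← ENNReal.ofReal_add (abs_nonneg _) zero_le_one]
        apply ENNReal.ofReal_le_ofReal
        rw [wt]
        apply max_le (by linarith [abs_nonneg (n:ℝ)]) (by linarith [abs_nonneg (n:ℝ)])
      calc w n * G n ≤ ((‖(n:ℂ)‖₊ : ℝ≥0∞) + 1) * G n := mul_le_mul_left hwn _
        _ = (‖(n:ℂ)‖₊ : ℝ≥0∞) * G n + G n := by ring
        _ = (‖(n:ℂ) * g n‖₊ : ℝ≥0∞) + G n := by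
            rw [hGdef, ← ENNReal.coe_mul, nnnorm_mul]
        _ ≤ (H n + Φ n + ENNReal.ofReal (|1 + η|) * G n) + G n := add_le_add_left hnorm _
        _ = H n + Φ n + κ * G n := by rw [hκdef]; ring
  -- squared, weighted sum
  have hsq : ∀ n : ℤ, w n ^ (2*(1-c)) * (G n) ^ 2 ≤
      9 * ((w n ^ (-c) * H n)^2 + (w n ^ (-c) * Φ n)^2 + (κ * (w n ^ (-c) * G n))^2) := by
    intro n
    have hwc : w n ^ (-c) * w n = w n ^ (1-c) := by
      nth_rewrite 2 [← ENNReal.rpow_one (w n)]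
      rw [w_rpow_mul_rpow]
      congr 1
      ring
    have h1 : (w n ^ (-c) * (w n * G n))^2 = w n ^ (2*(1-c)) * (G n)^2 := by
      rw [← mul_assoc, hwc, mul_pow, w_rpow_sq]
    rw [← h1]
    calc (w n ^ (-c) * (w n * G n))^2 ≤ (w n ^ (-c) * (H n + Φ n + κ * G n))^2 :=
          pow_le_pow_left' (mul_le_mul_right (hpt n) _) 2
      _ = (w n ^ (-c) * H n + w n ^ (-c) * Φ n + κ * (w n ^ (-c) * G n))^2 := by ring
      _ ≤ _ := add3_sq_le _ _ _
  apply ne_top_of_le_ne_top _ (ENNReal.tsum_le_tsum hsq)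
  have hsplit : ∑' n : ℤ, 9 * ((w n ^ (-c) * H n)^2 + (w n ^ (-c) * Φ n)^2
        + (κ * (w n ^ (-c) * G n))^2)
      = 9 * ((∑' n : ℤ, (w n ^ (-c) * H n)^2) + (∑' n : ℤ, (w n ^ (-c) * Φ n)^2)
        + (∑' n : ℤ, (κ * (w n ^ (-c) * G n))^2)) := by
    rw [ENNReal.tsum_mul_left]
    congr 1
    rw [ENNReal.tsum_add, ENNReal.tsum_add]
  rw [hsplit]
  have hwc1 : ∀ n : ℤ, w n ^ (-c) ≤ 1 := fun n => w_rpow_le_one (by linarith)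
  refine ENNReal.mul_ne_top (by norm_num) (ENNReal.add_ne_top.mpr ⟨ENNReal.add_ne_top.mpr ⟨?_, ?_⟩, ?_⟩)
  · apply ne_top_of_le_ne_top hH
    apply ENNReal.tsum_le_tsum
    intro n
    apply pow_le_pow_left'
    calc w n ^ (-c) * H n ≤ 1 * H n := mul_le_mul_left (hwc1 n) _
      _ = H n := one_mul _
  · apply ne_top_of_le_ne_top hΦ
    apply ENNReal.tsum_le_tsum
    intro n
    rw [mul_pow, w_rpow_sq]
    apply mul_le_mul_left
    have : (2:ℝ) * -c = -(2*c) := by ring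
    rw [this]
  · have : ∀ n : ℤ, (κ * (w n ^ (-c) * G n))^2 ≤ κ^2 * (G n)^2 := by
      intro n
      rw [mul_pow, mul_pow]
      apply mul_le_mul_right
      calc (w n ^ (-c))^2 * (G n)^2 ≤ 1 * (G n)^2 := by
            apply mul_le_mul_left
            calc (w n ^ (-c))^2 ≤ 1^2 := pow_le_pow_left' (hwc1 n) 2
              _ = 1 := one_pow 2
        _ = (G n)^2 := one_mul _
    apply ne_top_of_le_ne_top _ (ENNReal.tsum_le_tsum this)
    rw [ENNReal.tsum_mul_left]
    exact ENNReal.mul_ne_top (ENNReal.pow_ne_top hκne) hG2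

lemma hA_conv {s : ℝ} (a : ℤ → ℂ) (h : ∑' k : ℤ, w k ^ (2 * (-s)) * ((‖a k‖₊ : ℝ≥0∞))^2 ≠ ⊤) :
    ∑' k : ℤ, w k ^ (-(2*s)) * ((‖a k‖₊ : ℝ≥0∞))^2 ≠ ⊤ := by
  have : ∀ k : ℤ, w k ^ (-(2*s)) * ((‖a k‖₊ : ℝ≥0∞))^2
      = w k ^ (2 * (-s)) * ((‖a k‖₊ : ℝ≥0∞))^2 := by
    intro k
    congr 2
    ring
  rwa [tsum_congr this]

lemma hH_conv (b : ℤ → ℂ) (h : ∑' n : ℤ, w n ^ (2 * (0:ℝ)) * ((‖b n‖₊ : ℝ≥0∞))^2 ≠ ⊤) :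
    ∑' n : ℤ, ((‖b n‖₊ : ℝ≥0∞))^2 ≠ ⊤ := by
  have : ∀ n : ℤ, ((‖b n‖₊ : ℝ≥0∞))^2 = w n ^ (2 * (0:ℝ)) * ((‖b n‖₊ : ℝ≥0∞))^2 := by
    intro n
    rw [mul_zero, ENNReal.rpow_zero, one_mul]
  rwa [tsum_congr this]

lemma main_reg {s : ℝ} (hs0 : 0 ≤ s) (hs : s < 1/2) (a g : ℤ → ℂ) (η : ℝ)
    (hma : MemSob (-s) a) (hplus : PlusSupp g) (hg12 : MemSob (1/2) g)
    (hbuc : MemSob 0 (BuC a η g)) : MemSob (1-s) g := by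
  have hA := hA_conv a ((memSob_iff (-s) a).mp hma)
  have hG : ∑' m : ℤ, w m ^ (2 * (1/2 : ℝ)) * ((‖g m‖₊ : ℝ≥0∞))^2 ≠ ⊤ :=
    (memSob_iff (1/2) g).mp hg12
  have hH := hH_conv _ ((memSob_iff 0 (BuC a η g)).mp hbuc)
  have h1 := boot (s := s) (σ := 1/2) (c := 1/4 + s/2) hs0 (by linarith) (by linarith)
    (by linarith) a g η hplus hA hG hH
  have h2 := boot (s := s) (σ := 1 - (1/4 + s/2)) (c := s) hs0 le_rfl (by linarith)
    (by linarith) a g η hplus hA h1 hH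
  exact (memSob_iff (1-s) g).mpr h2


end SW

open SW

/-- For `0 ≤ s < 1/2` and `u ∈ H^{-s}(𝕋,ℝ)` with zero mean, the domain of the
Lax operator `L_u⁺`, i.e. `{g ∈ H^{1/2}_+ : B_u g ∈ H_+}`, is contained in
`H^{1-s}_+`; in particular every eigenfunction of
`L_u = L_u⁺ − (1 + η_s(‖u‖_{-s}))` lies in `H^{1-s}_+`. -/
theorem stmt8 (s : ℝ) (hs0 : 0 ≤ s) (hs : s < 1 / 2) :
    ∃ C > 0, ∀ a : ℤ → ℂ, RealCoeff a → a 0 = 0 → MemSob (-s) a →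
      (∀ g : ℤ → ℂ, PlusSupp g → MemSob (1 / 2) g →
        MemSob 0 (BuC a (etaS s C (sobNorm (-s) a)) g) → MemSob (1 - s) g) ∧
      (∀ (μ : ℝ) (g : ℤ → ℂ), PlusSupp g → MemSob (1 / 2) g → g ≠ 0 →
        (∀ n : ℤ, BuC a (etaS s C (sobNorm (-s) a)) g n =
          ((μ + 1 + etaS s C (sobNorm (-s) a) : ℝ) : ℂ) * g n) →
        MemSob (1 - s) g) := by
  refine ⟨1, one_pos, fun a _ _ hma => ⟨fun g hplus hg12 hbuc =>
    main_reg hs0 hs a g _ hma hplus hg12 hbuc, fun μ g hplus hg12 _ hev => ?_⟩⟩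
  set η := etaS s 1 (sobNorm (-s) a) with hη
  set z : ℂ := ((μ + 1 + η : ℝ) : ℂ) with hz
  have hg0 : MemSob 0 g := by
    unfold MemSob
    refine Summable.of_nonneg_of_le (fun n => mul_nonneg (Real.rpow_nonneg (wt_pos n).le _) (by positivity)) (fun n => ?_) hg12
    apply mul_le_mul_of_nonneg_right _ (by positivity)
    apply Real.rpow_le_rpow_of_exponent_le (one_le_wt n)
    norm_num
  have hbuc : MemSob 0 (BuC a η g) := by
    unfold MemSob
    have : ∀ n : ℤ, wt n ^ (2 * (0:ℝ)) * ‖BuC a η g n‖ ^ 2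
        = ‖z‖^2 * (wt n ^ (2 * (0:ℝ)) * ‖g n‖ ^ 2) := by
      intro n
      rw [hev n, norm_mul]
      ring
    rw [funext this]
    exact (hg0 : Summable _).mul_left _
  exact main_reg hs0 hs a g η hma hplus hg12 hbuc

end
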